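/- (Characterization of invariant polynomials, Lemma 2.x) Let α₀,…,α_ℓ : Ω → L and let P : Ω → L[X] be given by P(z, X) = Σ_{i=0}^{ℓ} α_i(z)X^i. Then (P ∥_{k,m} γ)(z, X) = P(z, X) for all γ ∈ Γ and z ∈ Ω if and only if for every 0 ≤ i ≤ ℓ one has (α_i |_{k−2i,m−i} γ)(z) = Σ_{j=i}^{ℓ} (j choose i) α_j(z)(c/(cz+d))^{j−i} for all γ = (a, b; c, d) ∈ Γ and z ∈ Ω, i.e. each α_i is quasi-modular of weight k−2i, type m−i and depth ≤ ℓ−i for Γ with coefficient family ((j choose i)·α_j)_{j=i,…,ℓ}. -/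

import Mathlib

noncomputable section

namespace DrinfeldQM

variable {L : Type*} [Field L]

/-- Entry `(i,j)` of `γ ∈ GL₂(F)`, viewed inside `L`. -/
def Mc (F : Subfield L) (γ : GL (Fin 2) F) (i j : Fin 2) : L :=
  ((γ : Matrix (Fin 2) (Fin 2) F) i j : L)

/-- Determinant of `γ ∈ GL₂(F)`, viewed inside `L`. -/
def detL (F : Subfield L) (γ : GL (Fin 2) F) : L :=
  ((γ : Matrix (Fin 2) (Fin 2) F).det : L)

/-- Automorphy factor `cz + d`. -/
def jf (F : Subfield L) (γ : GL (Fin 2) F) (z : L) : L :=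
  Mc F γ 1 0 * z + Mc F γ 1 1

/-- Fractional linear action of `GL₂(F)` on `L` (restricting to `Ω`). -/
def act (F : Subfield L) (γ : GL (Fin 2) F) (z : L) : L :=
  (Mc F γ 0 0 * z + Mc F γ 0 1) / jf F γ z

/-- The Drinfeld upper half plane `Ω = L ∖ F`. -/
def Omega (F : Subfield L) : Set L := {z | z ∉ F}

/-- The slash operator `f |_{k,m} γ` of weight `k` and type `m`. -/
def slash (F : Subfield L) (k m : ℤ) (f : L → L) (γ : GL (Fin 2) F) : L → L :=
  fun z => detL F γ ^ m * jf F γ z ^ (-k) * f (act F γ z)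

/-- `f` is quasi-modular of weight `k`, type `m` and depth `≤ ℓ` for the set `S ⊆ GL₂(F)`
with coefficient family `fam` (only the indices `0,…,ℓ` of `fam` are relevant). -/
def IsQM (F : Subfield L) (S : Set (GL (Fin 2) F)) (k m : ℤ) (ℓ : ℕ)
    (f : L → L) (fam : ℕ → L → L) : Prop :=
  Set.EqOn (fam 0) f (Omega F) ∧
    ∀ γ ∈ S, ∀ z ∈ Omega F,
      slash F k m f γ z =
        ∑ i ∈ Finset.range (ℓ + 1), fam i z * (Mc F γ 1 0 / jf F γ z) ^ i

/-- The coefficient family of the `i`-th coefficient `f_i` of a quasi-modular function with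
coefficient family `fam`:  `(f_i)_h = ((h+i) choose i) · f_{h+i}`. -/
def shiftFam (i : ℕ) (fam : ℕ → L → L) : ℕ → L → L :=
  fun h z => ((h + i).choose i : L) * fam (h + i) z

/-- The double-slash operator `f ∥_{k,m} γ` of a quasi-modular function of depth `≤ ℓ` with
coefficient family `fam`. -/
def dslash (F : Subfield L) (k m : ℤ) (ℓ : ℕ) (fam : ℕ → L → L)
    (γ : GL (Fin 2) F) : L → L :=
  fun z => ∑ i ∈ Finset.range (ℓ + 1),
    (-(Mc F γ 1 0) / jf F γ z) ^ i * detL F γ ^ (m - (i : ℤ)) *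
      jf F γ z ^ (2 * (i : ℤ) - k) * fam i (act F γ z)

/-- The double-slash operator on polynomial-valued functions `P : Ω → L[X]`:
`(P ∥_{k,m} γ)(z, X) = (det γ)^m (cz+d)^{-k} P(γ·z, ((cz+d)²/det γ)(X - c/(cz+d)))`. -/
def pdslash (F : Subfield L) (k m : ℤ) (P : L → Polynomial L)
    (γ : GL (Fin 2) F) : L → Polynomial L :=
  fun z =>
    Polynomial.C (detL F γ ^ m * jf F γ z ^ (-k)) *
      (P (act F γ z)).comp
        (Polynomial.C (jf F γ z ^ 2 / detL F γ) *
          (Polynomial.X - Polynomial.C (Mc F γ 1 0 / jf F γ z)))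

/-- The associated polynomial `P_f(z, X) = ∑_{i=0}^{ℓ} f_i(z) Xⁱ`. -/
def assocPoly (ℓ : ℕ) (fam : ℕ → L → L) : L → Polynomial L :=
  fun z => ∑ i ∈ Finset.range (ℓ + 1), Polynomial.C (fam i z) * Polynomial.X ^ i

/-- `E` satisfies the functional equation of the false Eisenstein series (weight 2, type 1,
depth 1, coefficient family `(E, -π⁻¹)`) for all `γ ∈ S`. -/
def EFunEq (F : Subfield L) (S : Set (GL (Fin 2) F)) (π : L) (E : L → L) : Prop :=
  ∀ γ ∈ S, ∀ z ∈ Omega F,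
    E (act F γ z) =
      (detL F γ)⁻¹ * jf F γ z ^ 2 * (E z - Mc F γ 1 0 / (π * jf F γ z))


/-! ### Auxiliary lemmas for the proof -/

private lemma sum_Icc_delta {R : Type*} [CommRing R] (w : R) (i l : ℕ) (hil : i ≤ l) :
    ∑ j ∈ Finset.Icc i l, (j.choose i : R) * (l.choose j : R) * ((-w) ^ (j - i) * w ^ (l - j))
      = if l = i then 1 else 0 := by
  rw [← Finset.Ico_add_one_right_eq_Icc, Finset.sum_Ico_eq_sum_range]
  have h1 : l + 1 - i = (l - i) + 1 := by omega
  rw [h1]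
  have h2 : ∀ t ∈ Finset.range (l - i + 1),
      ((i + t).choose i : R) * (l.choose (i + t) : R) * ((-w) ^ (i + t - i) * w ^ (l - (i + t)))
        = (l.choose i : R) * ((-w) ^ t * w ^ (l - i - t) * ((l - i).choose t : R)) := by
    intro t ht
    rw [Finset.mem_range] at ht
    have hc : l.choose (i + t) * (i + t).choose i = l.choose i * (l - i).choose t := by
      have h := Nat.choose_mul (n := l) (k := i + t) (s := i) (by omega)
      simpa using h
    have h3 : i + t - i = t := by omega
    have h4 : l - (i + t) = l - i - t := by omega
    rw [h3, h4]
    calc ((i + t).choose i : R) * (l.choose (i + t) : R) * ((-w) ^ t * w ^ (l - i - t))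
        = ((l.choose (i + t) * (i + t).choose i : ℕ) : R) * ((-w) ^ t * w ^ (l - i - t)) := by
          push_cast; ring
      _ = (l.choose i : R) * ((-w) ^ t * w ^ (l - i - t) * ((l - i).choose t : R)) := by
          rw [hc]; push_cast; ring
  rw [Finset.sum_congr rfl h2, ← Finset.mul_sum, ← add_pow, neg_add_cancel]
  rcases eq_or_lt_of_le hil with h | h
  · simp [← h]
  · rw [zero_pow (by omega), if_neg (by omega), mul_zero]

private lemma binom_inv {R : Type*} [CommRing R] (ℓ : ℕ) (w : R) (A B : ℕ → R)
    (h : ∀ i ≤ ℓ, A i = ∑ j ∈ Finset.Icc i ℓ, (j.choose i : R) * w ^ (j - i) * B j) :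
    ∀ i ≤ ℓ, B i = ∑ j ∈ Finset.Icc i ℓ, (j.choose i : R) * (-w) ^ (j - i) * A j := by
  intro i hi
  have e1 : ∑ j ∈ Finset.Icc i ℓ, (j.choose i : R) * (-w) ^ (j - i) * A j
      = ∑ j ∈ Finset.Icc i ℓ, ∑ l ∈ Finset.Icc j ℓ,
          (j.choose i : R) * (-w) ^ (j - i) * ((l.choose j : R) * w ^ (l - j) * B l) := by
    refine Finset.sum_congr rfl fun j hj => ?_
    rw [Finset.mem_Icc] at hj
    rw [h j hj.2, Finset.mul_sum]
  rw [e1, Finset.sum_comm' (t' := Finset.Icc i ℓ) (s' := fun l => Finset.Icc i l)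
    (fun j l => by simp only [Finset.mem_Icc]; omega)]
  have e2 : ∀ l ∈ Finset.Icc i ℓ, (∑ j ∈ Finset.Icc i l,
      (j.choose i : R) * (-w) ^ (j - i) * ((l.choose j : R) * w ^ (l - j) * B l))
      = (if l = i then 1 else 0) * B l := by
    intro l hl
    rw [Finset.mem_Icc] at hl
    rw [← sum_Icc_delta w i l hl.1, Finset.sum_mul]
    exact Finset.sum_congr rfl fun j hj => by ring
  rw [Finset.sum_congr rfl e2, Finset.sum_eq_single_of_mem i (by simp [Finset.mem_Icc, hi])]
  · rw [if_pos rfl, one_mul]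
  · intro b _ hb
    rw [if_neg hb, zero_mul]

private lemma detL_ne_zero (F : Subfield L) (γ : GL (Fin 2) F) : detL F γ ≠ 0 := by
  have h : ((γ : Matrix (Fin 2) (Fin 2) F).det) ≠ 0 :=
    ((Matrix.isUnit_iff_isUnit_det _).mp γ.isUnit).ne_zero
  simpa [detL] using h

private lemma detL_eq (F : Subfield L) (γ : GL (Fin 2) F) :
    detL F γ = Mc F γ 0 0 * Mc F γ 1 1 - Mc F γ 0 1 * Mc F γ 1 0 := by
  simp [detL, Mc, Matrix.det_fin_two]

private lemma jf_ne_zero {F : Subfield L} {γ : GL (Fin 2) F} {z : L} (hz : z ∈ Omega F) :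
    jf F γ z ≠ 0 := by
  intro h
  by_cases hc : Mc F γ 1 0 = 0
  · have hd : Mc F γ 1 1 = 0 := by simpa [jf, hc] using h
    exact detL_ne_zero F γ (by rw [detL_eq, hd, hc]; ring)
  · apply hz
    have hzz : z = -(Mc F γ 1 1) / Mc F γ 1 0 := by
      rw [eq_div_iff hc]; simp only [jf] at h; linear_combination h
    rw [hzz]
    exact div_mem (neg_mem (SetLike.coe_mem _)) (SetLike.coe_mem _)

private lemma coeff_sumC {R : Type*} [Semiring R] (n : ℕ) (a : ℕ → R) (t : ℕ) :
    (∑ i ∈ Finset.range n, Polynomial.C (a i) * Polynomial.X ^ i).coeff t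
      = if t < n then a t else 0 := by
  simp [Polynomial.finset_sum_coeff, Polynomial.coeff_C_mul, Polynomial.coeff_X_pow, mul_ite,
    Finset.sum_ite_eq, Finset.mem_range]

private lemma scalar_eq {D J : L} (hD : D ≠ 0) (hJ : J ≠ 0) (m k : ℤ) (j : ℕ) :
    D ^ m * J ^ (-k) * (J ^ 2 / D) ^ j = D ^ (m - (j:ℤ)) * J ^ (2*(j:ℤ) - k) := by
  rw [div_pow, ← pow_mul, ← zpow_natCast J (2*j), ← zpow_natCast D j,
    zpow_sub₀ hD, zpow_sub₀ hJ, zpow_neg]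
  push_cast
  field_simp

private lemma pdslash_coeff (F : Subfield L) (γ : GL (Fin 2) F) (k m : ℤ) (ℓ : ℕ)
    (α : ℕ → L → L) (z : L) (t : ℕ) :
    (pdslash F k m (assocPoly ℓ α) γ z).coeff t
      = ∑ j ∈ Finset.range (ℓ + 1),
          (detL F γ ^ m * jf F γ z ^ (-k) * (jf F γ z ^ 2 / detL F γ) ^ j) *
            (α j (act F γ z) * ((-(Mc F γ 1 0 / jf F γ z)) ^ (j - t) * (j.choose t : L))) := by
  simp only [pdslash, assocPoly]
  rw [Polynomial.sum_comp]
  simp only [Polynomial.mul_comp, Polynomial.C_comp, Polynomial.pow_comp, Polynomial.X_comp]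
  rw [Polynomial.coeff_C_mul, Polynomial.finset_sum_coeff, Finset.mul_sum]
  refine Finset.sum_congr rfl fun j hj => ?_
  rw [mul_pow, ← Polynomial.C_pow, sub_eq_add_neg, ← Polynomial.C_neg,
    Polynomial.coeff_C_mul, Polynomial.coeff_C_mul, Polynomial.coeff_X_add_C_pow]
  ring

private lemma pdslash_eq_iff (F : Subfield L) (γ : GL (Fin 2) F) (k m : ℤ) (ℓ : ℕ)
    (α : ℕ → L → L) (z : L) (hJ : jf F γ z ≠ 0) (hD : detL F γ ≠ 0) :
    pdslash F k m (assocPoly ℓ α) γ z = assocPoly ℓ α z ↔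
      ∀ i ≤ ℓ, ∑ j ∈ Finset.Icc i ℓ,
          (j.choose i : L) * (-(Mc F γ 1 0 / jf F γ z)) ^ (j - i) *
            (detL F γ ^ (m - (j : ℤ)) * jf F γ z ^ (2 * (j : ℤ) - k) * α j (act F γ z))
        = α i z := by
  have hS : ∀ t, t ≤ ℓ → (∑ j ∈ Finset.range (ℓ + 1),
      (detL F γ ^ m * jf F γ z ^ (-k) * (jf F γ z ^ 2 / detL F γ) ^ j) *
        (α j (act F γ z) * ((-(Mc F γ 1 0 / jf F γ z)) ^ (j - t) * (j.choose t : L))))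
      = ∑ j ∈ Finset.Icc t ℓ,
          (j.choose t : L) * (-(Mc F γ 1 0 / jf F γ z)) ^ (j - t) *
            (detL F γ ^ (m - (j : ℤ)) * jf F γ z ^ (2 * (j : ℤ) - k) * α j (act F γ z)) := by
    intro t ht
    have hsub : Finset.Icc t ℓ ⊆ Finset.range (ℓ + 1) := fun j hj => by
      rw [Finset.mem_Icc] at hj; rw [Finset.mem_range]; omega
    rw [← Finset.sum_subset hsub (fun j hj hj' => by
          rw [Finset.mem_range] at hj; rw [Finset.mem_Icc] at hj'
          rw [Nat.choose_eq_zero_of_lt (by omega), Nat.cast_zero]; ring)]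
    refine Finset.sum_congr rfl fun j hj => ?_
    rw [scalar_eq hD hJ]
    ring
  have hS0 : ∀ t, ℓ < t → (∑ j ∈ Finset.range (ℓ + 1),
      (detL F γ ^ m * jf F γ z ^ (-k) * (jf F γ z ^ 2 / detL F γ) ^ j) *
        (α j (act F γ z) * ((-(Mc F γ 1 0 / jf F γ z)) ^ (j - t) * (j.choose t : L)))) = 0 := by
    intro t ht
    refine Finset.sum_eq_zero fun j hj => ?_
    rw [Finset.mem_range] at hj
    rw [Nat.choose_eq_zero_of_lt (by omega), Nat.cast_zero]; ring
  rw [Polynomial.ext_iff]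
  constructor
  · intro h i hi
    have hh := h i
    rw [pdslash_coeff, hS i hi] at hh
    simpa [assocPoly, coeff_sumC, Nat.lt_succ_of_le hi] using hh
  · intro h t
    rw [pdslash_coeff]
    by_cases ht : t ≤ ℓ
    · rw [hS t ht, h t ht]
      simp [assocPoly, coeff_sumC, Nat.lt_succ_of_le ht]
    · rw [hS0 t (by omega)]
      simp only [assocPoly]
      rw [coeff_sumC, if_neg (by omega)]

private lemma isQM_iff (F : Subfield L) (Γ : Subgroup (GL (Fin 2) F)) (k m : ℤ) (ℓ : ℕ)
    (α : ℕ → L → L) (i : ℕ) (hi : i ≤ ℓ) :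
    IsQM F (Γ : Set (GL (Fin 2) F)) (k - 2 * (i : ℤ)) (m - (i : ℤ)) (ℓ - i)
        (α i) (shiftFam i α) ↔
      ∀ γ ∈ Γ, ∀ z ∈ Omega F,
        detL F γ ^ (m - (i : ℤ)) * jf F γ z ^ (2 * (i : ℤ) - k) * α i (act F γ z)
          = ∑ j ∈ Finset.Icc i ℓ,
              (j.choose i : L) * (Mc F γ 1 0 / jf F γ z) ^ (j - i) * α j z := by
  have h0 : Set.EqOn (shiftFam i α 0) (α i) (Omega F) := fun z _ => by
    simp [shiftFam]
  rw [IsQM, and_iff_right h0]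
  refine forall₂_congr fun γ hγ => forall₂_congr fun z hz => ?_
  have hslash : slash F (k - 2 * (i : ℤ)) (m - (i : ℤ)) (α i) γ z
      = detL F γ ^ (m - (i : ℤ)) * jf F γ z ^ (2 * (i : ℤ) - k) * α i (act F γ z) := by
    rw [slash, neg_sub]
  have hsum : (∑ h ∈ Finset.range (ℓ - i + 1),
        shiftFam i α h z * (Mc F γ 1 0 / jf F γ z) ^ h)
      = ∑ j ∈ Finset.Icc i ℓ,
          (j.choose i : L) * (Mc F γ 1 0 / jf F γ z) ^ (j - i) * α j z := by
    rw [← Finset.Ico_add_one_right_eq_Icc, Finset.sum_Ico_eq_sum_range]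
    have h1 : ℓ + 1 - i = (ℓ - i) + 1 := by omega
    rw [h1]
    refine Finset.sum_congr rfl fun h hh => ?_
    have h2 : i + h - i = h := by omega
    rw [h2, shiftFam, Nat.add_comm h i]
    ring
  rw [hslash, hsum]


/-- A polynomial `P(z,X) = ∑ αᵢ(z) Xⁱ` is invariant under the double-slash action of `Γ`
iff each `αᵢ` is quasi-modular of weight `k-2i`, type `m-i` and depth `≤ ℓ-i` with
coefficient family `((j choose i)·α_j)_{j=i,…,ℓ}`. -/
theorem invariant_iff_coefficients_quasi_modular
    {L : Type*} [Field L] (F : Subfield L) (Γ : Subgroup (GL (Fin 2) F))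
    (k m : ℤ) (ℓ : ℕ) (α : ℕ → L → L) :
    (∀ γ ∈ Γ, ∀ z ∈ Omega F,
        pdslash F k m (assocPoly ℓ α) γ z = assocPoly ℓ α z) ↔
      ∀ i ≤ ℓ, IsQM F (Γ : Set (GL (Fin 2) F)) (k - 2 * (i : ℤ)) (m - (i : ℤ)) (ℓ - i)
        (α i) (shiftFam i α) := by
  constructor
  · intro h i hi
    rw [isQM_iff F Γ k m ℓ α i hi]
    intro γ hγ z hz
    have hJ : jf F γ z ≠ 0 := jf_ne_zero hz
    have hD : detL F γ ≠ 0 := detL_ne_zero F γ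
    have hstar := (pdslash_eq_iff F γ k m ℓ α z hJ hD).mp (h γ hγ z hz)
    have hinv := binom_inv ℓ (-(Mc F γ 1 0 / jf F γ z))
      (fun n => α n z)
      (fun j => detL F γ ^ (m - (j : ℤ)) * jf F γ z ^ (2 * (j : ℤ) - k) * α j (act F γ z))
      (fun n hn => (hstar n hn).symm) i hi
    simpa [neg_neg] using hinv
  · intro h γ hγ z hz
    have hJ : jf F γ z ≠ 0 := jf_ne_zero hz
    have hD : detL F γ ≠ 0 := detL_ne_zero F γ
    rw [pdslash_eq_iff F γ k m ℓ α z hJ hD]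
    intro i hi
    have hdag : ∀ n ≤ ℓ,
        detL F γ ^ (m - (n : ℤ)) * jf F γ z ^ (2 * (n : ℤ) - k) * α n (act F γ z)
          = ∑ j ∈ Finset.Icc n ℓ,
              (j.choose n : L) * (Mc F γ 1 0 / jf F γ z) ^ (j - n) * α j z :=
      fun n hn => (isQM_iff F Γ k m ℓ α n hn).mp (h n hn) γ hγ z hz
    exact (binom_inv ℓ (Mc F γ 1 0 / jf F γ z)
      (fun j => detL F γ ^ (m - (j : ℤ)) * jf F γ z ^ (2 * (j : ℤ) - k) * α j (act F γ z))
      (fun n => α n z) hdag i hi).symm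


end DrinfeldQM
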